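/- Fix ε > 0 and η > 0, and let (p_n) be a sequence with √((2+ε)·(log n)/n) ≤ p_n < 1/2 and 2·p_n·e^{1−2p_n} ≤ 1 − (2+η)·(log n)/n for all large n. Let S_n be the number of Seymour vertices of the random digraph D(n,p_n). Then P(S_n = n) → 1 as n → ∞; that is, with high probability every vertex of D(n,p_n) is a Seymour vertex. -/

import Mathlib

/-! Model of the random digraph `D(n, p)` on vertex set `Fin n`:  a sample point assigns a
Boolean to every ordered pair of vertices, and the arc `u → v` (for `u ≠ v`) is present iff
the Boolean at `(u, v)` is `true`.  The probability of a sample point is the product, over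
ordered pairs of distinct vertices, of `p` for each present arc and `1 − p` for each absent
arc (the unused diagonal coordinates are forced to be `false`), so that the arcs are
independent and each is present with probability `p`. -/

/-- The sample space of the random digraph on `n` vertices. -/
abbrev DOmega (n : ℕ) := Fin n → Fin n → Bool

/-- `dadj ω u v` : the arc `u → v` is present in the digraph coded by `ω`. -/
def dadj {n : ℕ} (ω : DOmega n) (u v : Fin n) : Prop :=
  u ≠ v ∧ ω u v = true

/-- The probability weight of the sample point `ω` in the model `D(n, p)`. -/
noncomputable def dwt {n : ℕ} (p : ℝ) (ω : DOmega n) : ℝ :=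
  ∏ u : Fin n, ∏ v : Fin n,
    if u = v then (if ω u v then 0 else 1) else (if ω u v then p else 1 - p)

/-- Probability of an event in the random digraph model `D(n, p)`. -/
noncomputable def dPr {n : ℕ} (p : ℝ) (E : Set (DOmega n)) : ℝ :=
  ∑ ω : DOmega n, E.indicator (dwt p) ω

/-- Expectation of a random variable in the random digraph model `D(n, p)`. -/
noncomputable def dEx {n : ℕ} (p : ℝ) (f : DOmega n → ℝ) : ℝ :=
  ∑ ω : DOmega n, dwt p ω * f ω

/-- The first out-neighborhood of `v`: vertices at directed distance exactly 1. -/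
def dN1 {n : ℕ} (ω : DOmega n) (v : Fin n) : Set (Fin n) := {w | dadj ω v w}

/-- The second out-neighborhood of `v`: vertices at directed distance exactly 2. -/
def dN2 {n : ℕ} (ω : DOmega n) (v : Fin n) : Set (Fin n) :=
  {w | w ≠ v ∧ ¬ dadj ω v w ∧ ∃ x, dadj ω v x ∧ dadj ω x w}

/-- `v` is a Seymour vertex of the digraph coded by `ω`. -/
def dSeymour {n : ℕ} (ω : DOmega n) (v : Fin n) : Prop :=
  (dN1 ω v).ncard ≤ (dN2 ω v).ncard

/-- The number of Seymour vertices. -/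
noncomputable def dS {n : ℕ} (ω : DOmega n) : ℕ := {v | dSeymour ω v}.ncard

/-- The expected number of Seymour vertices of `D(n, p)`. -/
noncomputable def dES (n : ℕ) (p : ℝ) : ℝ := dEx p (fun ω : DOmega n => (dS ω : ℝ))


open Finset

section Base
variable {n : ℕ} {p : ℝ}

lemma dsp_sum_fn_prod {ι β : Type*} [Fintype ι] [DecidableEq ι] [Fintype β]
    (g : ι → β → ℝ) :
    ∑ f : ι → β, ∏ i, g i (f i) = ∏ i, ∑ b, g i b := by
  rw [Finset.prod_univ_sum (fun _ => (univ : Finset β)) g, Fintype.piFinset_univ]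

lemma dsp_sum_prod_prod (g : Fin n → Fin n → Bool → ℝ) :
    ∑ ω : DOmega n, ∏ u, ∏ v, g u v (ω u v)
      = ∏ u, ∏ v, (g u v false + g u v true) := by
  have h1 : ∑ ω : DOmega n, ∏ u, ∏ v, g u v (ω u v)
      = ∏ u, ∑ r : Fin n → Bool, ∏ v, g u v (r v) :=
    dsp_sum_fn_prod (fun u (r : Fin n → Bool) => ∏ v, g u v (r v))
  rw [h1]
  refine Finset.prod_congr rfl fun u _ => ?_
  rw [dsp_sum_fn_prod (fun v b => g u v b)]
  refine Finset.prod_congr rfl fun v _ => ?_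
  rw [Fintype.sum_bool]
  ring

/-- per-coordinate weight -/
noncomputable def dW (p : ℝ) {n : ℕ} (u v : Fin n) (b : Bool) : ℝ :=
  if u = v then (if b then 0 else 1) else (if b then p else 1 - p)

lemma dwt_eq_prod (ω : DOmega n) :
    dwt p ω = ∏ u, ∏ v, dW p u v (ω u v) := rfl

lemma dW_nonneg (h0 : 0 ≤ p) (h1 : p ≤ 1) (u v : Fin n) (b : Bool) :
    0 ≤ dW p u v b := by
  unfold dW
  split
  · split <;> norm_num
  · split
    · exact h0
    · linarith

lemma dW_sum (u v : Fin n) : dW p u v false + dW p u v true = 1 := by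
  unfold dW; split <;> simp

lemma dwt_nonneg (h0 : 0 ≤ p) (h1 : p ≤ 1) (ω : DOmega n) : 0 ≤ dwt p ω := by
  rw [dwt_eq_prod]
  exact Finset.prod_nonneg fun u _ => Finset.prod_nonneg fun v _ => dW_nonneg h0 h1 u v _

lemma dsp_sum_dwt : ∑ ω : DOmega n, dwt p ω = 1 := by
  have : ∑ ω : DOmega n, ∏ u, ∏ v, dW p u v (ω u v)
      = ∏ u : Fin n, ∏ v : Fin n, (dW p u v false + dW p u v true) :=
    dsp_sum_prod_prod _
  simp only [dwt_eq_prod, this, dW_sum, Finset.prod_const_one]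

lemma dPr_nonneg (h0 : 0 ≤ p) (h1 : p ≤ 1) (E : Set (DOmega n)) : 0 ≤ dPr p E :=
  Finset.sum_nonneg fun ω _ => Set.indicator_nonneg (fun x _ => dwt_nonneg h0 h1 x) ω

lemma dPr_mono (h0 : 0 ≤ p) (h1 : p ≤ 1) {E F : Set (DOmega n)} (h : E ⊆ F) :
    dPr p E ≤ dPr p F := by
  refine Finset.sum_le_sum fun ω _ => ?_
  by_cases hω : ω ∈ E
  · rw [Set.indicator_of_mem hω, Set.indicator_of_mem (h hω)]
  · rw [Set.indicator_of_notMem hω]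
    exact Set.indicator_nonneg (fun x _ => dwt_nonneg h0 h1 x) ω

lemma dPr_le_one (h0 : 0 ≤ p) (h1 : p ≤ 1) (E : Set (DOmega n)) : dPr p E ≤ 1 := by
  calc dPr p E ≤ ∑ ω : DOmega n, dwt p ω := by
        refine Finset.sum_le_sum fun ω _ => ?_
        exact Set.indicator_apply_le' (fun _ => le_rfl) (fun _ => dwt_nonneg h0 h1 ω)
    _ = 1 := dsp_sum_dwt

lemma dPr_compl (E : Set (DOmega n)) : dPr p E + dPr p Eᶜ = 1 := by
  rw [← dsp_sum_dwt (n := n) (p := p), dPr, dPr, ← Finset.sum_add_distrib]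
  refine Finset.sum_congr rfl fun ω _ => ?_
  by_cases hω : ω ∈ E
  · rw [Set.indicator_of_mem hω, Set.indicator_of_notMem (by simpa using hω)]; ring
  · rw [Set.indicator_of_notMem hω, Set.indicator_of_mem (by simpa using hω)]; ring

lemma dPr_le_sum (h0 : 0 ≤ p) (h1 : p ≤ 1) {ι : Type*} (I : Finset ι)
    (F : ι → Set (DOmega n)) (E : Set (DOmega n))
    (hE : ∀ ω ∈ E, ∃ i ∈ I, ω ∈ F i) :
    dPr p E ≤ ∑ i ∈ I, dPr p (F i) := by
  have key : ∀ ω : DOmega n, E.indicator (dwt p) ω ≤ ∑ i ∈ I, (F i).indicator (dwt p) ω := by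
    intro ω
    by_cases hω : ω ∈ E
    · obtain ⟨i, hiI, hiF⟩ := hE ω hω
      rw [Set.indicator_of_mem hω]
      calc dwt p ω = (F i).indicator (dwt p) ω := (Set.indicator_of_mem hiF _).symm
        _ ≤ ∑ i ∈ I, (F i).indicator (dwt p) ω :=
            Finset.single_le_sum (fun j _ => Set.indicator_nonneg
              (fun x _ => dwt_nonneg h0 h1 x) ω) hiI
    · rw [Set.indicator_of_notMem hω]
      exact Finset.sum_nonneg fun j _ => Set.indicator_nonneg
        (fun x _ => dwt_nonneg h0 h1 x) ω
  calc dPr p E ≤ ∑ ω : DOmega n, ∑ i ∈ I, (F i).indicator (dwt p) ω :=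
        Finset.sum_le_sum fun ω _ => key ω
    _ = ∑ i ∈ I, dPr p (F i) := Finset.sum_comm

end Base
section Deg
variable {n : ℕ} {p : ℝ}

/-- out-degree -/
def ddeg {n : ℕ} (ω : DOmega n) (v : Fin n) : ℕ :=
  (Finset.univ.filter fun w => v ≠ w ∧ ω v w = true).card

lemma dN1_ncard (ω : DOmega n) (v : Fin n) : (dN1 ω v).ncard = ddeg ω v := by
  have : dN1 ω v = ↑(Finset.univ.filter fun w => v ≠ w ∧ ω v w = true) := by
    ext w; simp [dN1, dadj]
  rw [this, Set.ncard_coe_finset, ddeg]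

lemma dsp_pow_ddeg (ω : DOmega n) (v : Fin n) (c : ℝ) :
    c ^ (ddeg ω v) = ∏ u, ∏ w, (if u = v ∧ u ≠ w ∧ ω u w = true then c else 1) := by
  have h1 : ∀ u : Fin n, u ≠ v → ∏ w, (if u = v ∧ u ≠ w ∧ ω u w = true then c else 1) = 1 := by
    intro u hu
    refine Finset.prod_eq_one fun w _ => by simp [hu]
  rw [Finset.prod_eq_single v (fun u _ hu => h1 u hu) (by simp)]
  rw [ddeg, ← Finset.prod_const c, Finset.prod_filter]
  refine Finset.prod_congr rfl fun w _ => ?_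
  by_cases h : v ≠ w ∧ ω v w = true <;> simp [h]

lemma dsp_mgf (v : Fin n) (c : ℝ) :
    dEx p (fun ω : DOmega n => c ^ (ddeg ω v)) = (1 - p + p * c) ^ (n - 1) := by
  have heq : ∀ ω : DOmega n, dwt p ω * c ^ (ddeg ω v)
      = ∏ u, ∏ w, (dW p u w (ω u w) * (if u = v ∧ u ≠ w ∧ ω u w = true then c else 1)) := by
    intro ω
    rw [dwt_eq_prod, dsp_pow_ddeg ω v c, ← Finset.prod_mul_distrib]
    refine Finset.prod_congr rfl fun u _ => (Finset.prod_mul_distrib).symm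
  rw [dEx]
  simp only [heq]
  have := dsp_sum_prod_prod (n := n)
    (fun u w b => dW p u w b * (if u = v ∧ u ≠ w ∧ b = true then c else 1))
  rw [this]
  have hval : ∀ u w : Fin n,
      dW p u w false * (if u = v ∧ u ≠ w ∧ False then c else 1)
        + dW p u w true * (if u = v ∧ u ≠ w ∧ True then c else 1)
      = if u = v ∧ w ≠ v then 1 - p + p * c else 1 := by
    intro u w
    by_cases huv : u = v
    · subst huv
      by_cases huw : u = w
      · subst huw; simp [dW]
      · simp [dW, huw, Ne.symm huw]
    · by_cases huw : u = w
      · subst huw; simp [dW, huv]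
      · simp [dW, huv, huw]
  calc (∏ u : Fin n, ∏ w : Fin n, (dW p u w false * (if u = v ∧ u ≠ w ∧ (false : Bool) = true then c else 1)
        + dW p u w true * (if u = v ∧ u ≠ w ∧ (true : Bool) = true then c else 1)))
      = ∏ u : Fin n, ∏ w : Fin n, (if u = v ∧ w ≠ v then 1 - p + p * c else 1) := by
        refine Finset.prod_congr rfl fun u _ => Finset.prod_congr rfl fun w _ => ?_
        simpa using hval u w
    _ = (1 - p + p * c) ^ (n - 1) := by
        rw [Finset.prod_eq_single v (fun u _ hu => Finset.prod_eq_one fun w _ => by simp [hu])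
          (by simp)]
        simp only [true_and]
        rw [← Finset.prod_filter, Finset.filter_ne', Finset.prod_const,
          Finset.card_erase_of_mem (Finset.mem_univ v), Finset.card_univ, Fintype.card_fin]

end Deg
section Chern
variable {n : ℕ} {p : ℝ}

lemma dsp_chernoff (h0 : 0 ≤ p) (h1 : p ≤ 1) (v : Fin n) (c r : ℝ) (hc : 0 < c)
    (E : Set (DOmega n)) (hE : ∀ ω ∈ E, c ^ r ≤ c ^ (ddeg ω v)) :
    dPr p E ≤ (1 - p + p * c) ^ (n - 1) / c ^ r := by
  have hcr : (0:ℝ) < c ^ r := Real.rpow_pos_of_pos hc r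
  rw [le_div_iff₀ hcr]
  calc dPr p E * c ^ r = ∑ ω : DOmega n, E.indicator (dwt p) ω * c ^ r := by
        rw [dPr, Finset.sum_mul]
    _ ≤ ∑ ω : DOmega n, dwt p ω * c ^ (ddeg ω v) := by
        refine Finset.sum_le_sum fun ω _ => ?_
        by_cases hω : ω ∈ E
        · rw [Set.indicator_of_mem hω]
          exact mul_le_mul_of_nonneg_left (hE ω hω) (dwt_nonneg h0 h1 ω)
        · rw [Set.indicator_of_notMem hω, zero_mul]
          exact mul_nonneg (dwt_nonneg h0 h1 ω) (pow_nonneg hc.le _)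
    _ = (1 - p + p * c) ^ (n - 1) := dsp_mgf v c

end Chern
section Row
open Classical in
/-- The event: row of `v` equals `S`, and no arcs from `S` to `T`. -/
def rowEv {n : ℕ} (v : Fin n) (S T : Finset (Fin n)) : Set (DOmega n) :=
  {ω | (∀ w, w ≠ v → (ω v w = true ↔ w ∈ S)) ∧ ∀ x ∈ S, ∀ w ∈ T, ω x w = false}

open Classical in
/-- indicator factor for the event `rowEv`. -/
noncomputable def dChi {n : ℕ} (v : Fin n) (S T : Finset (Fin n)) (u w : Fin n) (b : Bool) : ℝ :=
  if u = v ∧ w ≠ v then (if (b = true ↔ w ∈ S) then 1 else 0)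
  else if u ∈ S ∧ w ∈ T then (if b then 0 else 1) else 1

variable {n : ℕ} {p : ℝ} {v : Fin n} {S T : Finset (Fin n)}

open Classical in
lemma dChi_prod (hvS : v ∉ S) (ω : DOmega n) :
    (∏ u, ∏ w, dChi v S T u w (ω u w)) = if ω ∈ rowEv v S T then 1 else 0 := by
  classical
  by_cases hω : ω ∈ rowEv v S T
  · rw [if_pos hω]
    refine Finset.prod_eq_one fun u _ => Finset.prod_eq_one fun w _ => ?_
    obtain ⟨hrow, hST⟩ := hω
    unfold dChi
    by_cases h1 : u = v ∧ w ≠ v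
    · rw [if_pos h1, if_pos (by rw [h1.1]; exact hrow w h1.2)]
    · rw [if_neg h1]
      by_cases h2 : u ∈ S ∧ w ∈ T
      · rw [if_pos h2, hST u h2.1 w h2.2]
        norm_num
      · rw [if_neg h2]
  · rw [if_neg hω]
    rw [rowEv, Set.mem_setOf_eq, not_and_or] at hω
    rcases hω with hrow | hST
    · obtain ⟨w, hw⟩ := not_forall.mp hrow
      obtain ⟨hwv, hiff⟩ := _root_.not_imp.mp hw
      refine Finset.prod_eq_zero (Finset.mem_univ v) (Finset.prod_eq_zero (Finset.mem_univ w) ?_)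
      unfold dChi
      rw [if_pos ⟨rfl, hwv⟩, if_neg hiff]
    · push_neg at hST
      obtain ⟨x, hxS, w, hwT, hxw⟩ := hST
      refine Finset.prod_eq_zero (Finset.mem_univ x) (Finset.prod_eq_zero (Finset.mem_univ w) ?_)
      unfold dChi
      have hxv : ¬(x = v ∧ w ≠ v) := fun h => hvS (h.1 ▸ hxS)
      rw [if_neg hxv, if_pos ⟨hxS, hwT⟩]
      simp only [ne_eq, Bool.not_eq_false] at hxw
      rw [hxw]; simp

lemma dPr_rowEv (hvS : v ∉ S) (hT : ∀ w ∈ T, w ∉ S ∧ w ≠ v) :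
    dPr p (rowEv v S T)
      = p ^ S.card * (1 - p) ^ (n - 1 - S.card) * ((1 - p) ^ T.card) ^ S.card := by
  classical
  have hsub : S ⊆ Finset.univ.erase v := fun x hx =>
    Finset.mem_erase.mpr ⟨fun h => hvS (h ▸ hx), Finset.mem_univ x⟩
  have hind : ∀ ω : DOmega n, (rowEv v S T).indicator (dwt p) ω
      = ∏ u, ∏ w, (dW p u w (ω u w) * dChi v S T u w (ω u w)) := by
    intro ω
    rw [Finset.prod_congr rfl fun u _ => Finset.prod_mul_distrib, Finset.prod_mul_distrib,
      ← dwt_eq_prod, dChi_prod hvS ω]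
    by_cases hω : ω ∈ rowEv v S T
    · rw [Set.indicator_of_mem hω, if_pos hω, mul_one]
    · rw [Set.indicator_of_notMem hω, if_neg hω, mul_zero]
  have hmaster := dsp_sum_prod_prod (n := n) (fun u w b => dW p u w b * dChi v S T u w b)
  have hc : ∀ u w : Fin n,
      dW p u w false * dChi v S T u w false + dW p u w true * dChi v S T u w true
      = if u = v then (if w = v then 1 else if w ∈ S then p else 1 - p)
        else (if u ∈ S ∧ w ∈ T then 1 - p else 1) := by
    intro u w
    unfold dW dChi
    by_cases huv : u = v
    · by_cases hwv : w = v
      · have huw : u = w := by rw [huv, hwv]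
        simp [huv, hwv, huw, hvS]
      · have huw : u ≠ w := by rw [huv]; exact fun h => hwv h.symm
        have hvw : v ≠ w := fun h => hwv h.symm
        by_cases hwS : w ∈ S
        · simp [huv, huw, hvw, hwv, hwS]
        · simp [huv, huw, hvw, hwv, hwS]
    · by_cases h2 : u ∈ S ∧ w ∈ T
      · have huw : u ≠ w := fun h => (hT w h2.2).1 (h ▸ h2.1)
        simp [huv, huw, h2]
      · by_cases huw : u = w
        · have hwv : ¬ w = v := fun h => huv (huw.trans h)
          have h2' : ¬ (w ∈ S ∧ w ∈ T) := fun h => h2 ⟨by rw [huw]; exact h.1, h.2⟩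
          simp [huv, huw, hwv, h2', h2]
        · simp [huv, huw, h2]
  have hrow : (∏ w : Fin n, if w = v then (1:ℝ) else if w ∈ S then p else 1 - p)
      = p ^ S.card * (1 - p) ^ (n - 1 - S.card) := by
    rw [← Finset.prod_filter_mul_prod_filter_not Finset.univ (fun w => w = v)]
    have h1 : Finset.univ.filter (fun w => w = v) = {v} := by
      ext w; simp
    have h2 : Finset.univ.filter (fun w : Fin n => ¬ w = v) = Finset.univ.erase v := by
      ext w; simp [Finset.mem_erase]
    rw [h1, h2]
    have h3 : (∏ w ∈ ({v} : Finset (Fin n)), if w = v then (1:ℝ) else if w ∈ S then p else 1 - p) = 1 := by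
      simp
    rw [h3, one_mul]
    have h4 : ∀ w ∈ Finset.univ.erase v,
        (if w = v then (1:ℝ) else if w ∈ S then p else 1 - p) = if w ∈ S then p else 1 - p := by
      intro w hw
      rw [if_neg (Finset.mem_erase.mp hw).1]
    rw [Finset.prod_congr rfl h4, Finset.prod_ite, Finset.prod_const, Finset.prod_const]
    have h5 : (Finset.univ.erase v).filter (fun w => w ∈ S) = S := by
      rw [Finset.filter_mem_eq_inter, Finset.inter_eq_right.mpr hsub]
    have h6 : ((Finset.univ.erase v).filter (fun w => ¬ w ∈ S)).card = n - 1 - S.card := by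
      have := Finset.card_filter_add_card_filter_not
        (s := Finset.univ.erase v) (p := fun w => w ∈ S)
      rw [h5] at this
      have hcard : (Finset.univ.erase v).card = n - 1 := by
        rw [Finset.card_erase_of_mem (Finset.mem_univ v), Finset.card_univ, Fintype.card_fin]
      omega
    rw [h5, h6]
  have hrest : (∏ u ∈ Finset.univ.erase v, ∏ w : Fin n,
      (if u ∈ S ∧ w ∈ T then 1 - p else (1:ℝ))) = ((1 - p) ^ T.card) ^ S.card := by
    have h7 : ∀ u ∈ Finset.univ.erase v, (∏ w : Fin n, if u ∈ S ∧ w ∈ T then 1 - p else (1:ℝ))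
        = if u ∈ S then (1 - p) ^ T.card else 1 := by
      intro u _
      by_cases huS : u ∈ S
      · rw [if_pos huS]
        have : ∀ w : Fin n, (if u ∈ S ∧ w ∈ T then 1 - p else (1:ℝ)) = if w ∈ T then 1 - p else 1 := by
          intro w; by_cases hw : w ∈ T <;> simp [huS, hw]
        rw [Finset.prod_congr rfl fun w _ => this w, Finset.prod_ite, Finset.prod_const,
          Finset.prod_const, one_pow, mul_one, Finset.filter_mem_eq_inter,
          Finset.univ_inter]
      · rw [if_neg huS]
        exact Finset.prod_eq_one fun w _ => by simp [huS]
    rw [Finset.prod_congr rfl h7, Finset.prod_ite, Finset.prod_const, Finset.prod_const,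
      one_pow, mul_one]
    have h5 : (Finset.univ.erase v).filter (fun w => w ∈ S) = S := by
      rw [Finset.filter_mem_eq_inter, Finset.inter_eq_right.mpr hsub]
    rw [h5]
  calc dPr p (rowEv v S T)
      = ∑ ω : DOmega n, ∏ u, ∏ w, (dW p u w (ω u w) * dChi v S T u w (ω u w)) := by
        rw [dPr]; exact Finset.sum_congr rfl fun ω _ => hind ω
    _ = ∏ u : Fin n, ∏ w : Fin n,
          (dW p u w false * dChi v S T u w false + dW p u w true * dChi v S T u w true) := hmaster
    _ = ∏ u : Fin n, ∏ w : Fin n, (if u = v then (if w = v then 1 else if w ∈ S then p else 1 - p)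
          else (if u ∈ S ∧ w ∈ T then 1 - p else 1)) := by
        exact Finset.prod_congr rfl fun u _ => Finset.prod_congr rfl fun w _ => hc u w
    _ = p ^ S.card * (1 - p) ^ (n - 1 - S.card) * ((1 - p) ^ T.card) ^ S.card := by
        rw [← Finset.mul_prod_erase Finset.univ _ (Finset.mem_univ v)]
        have hv : (∏ w : Fin n, if v = v then (if w = v then (1:ℝ) else if w ∈ S then p else 1 - p)
            else (if v ∈ S ∧ w ∈ T then 1 - p else 1)) = p ^ S.card * (1 - p) ^ (n - 1 - S.card) := by
          rw [← hrow]
          exact Finset.prod_congr rfl fun w _ => by rw [if_pos rfl]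
        have hu : (∏ u ∈ Finset.univ.erase v, ∏ w : Fin n,
            (if u = v then (if w = v then (1:ℝ) else if w ∈ S then p else 1 - p)
            else (if u ∈ S ∧ w ∈ T then 1 - p else 1))) = ((1 - p) ^ T.card) ^ S.card := by
          rw [← hrest]
          refine Finset.prod_congr rfl fun u hu => Finset.prod_congr rfl fun w _ => ?_
          rw [if_neg (Finset.mem_erase.mp hu).1]
        rw [hv, hu]

end Row
section Events
variable {n : ℕ} {p : ℝ}

lemma dPr_union_le (h0 : 0 ≤ p) (h1 : p ≤ 1) (E F : Set (DOmega n)) :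
    dPr p (E ∪ F) ≤ dPr p E + dPr p F := by
  have h := dPr_le_sum h0 h1 (Finset.univ : Finset Bool)
    (fun b => if b then E else F) (E ∪ F) ?_
  · simpa [Fintype.sum_bool] using h
  · rintro ω (hω | hω)
    exacts [⟨true, Finset.mem_univ _, by simpa using hω⟩,
      ⟨false, Finset.mem_univ _, by simpa using hω⟩]

/-- bad event A : degree at least (n-1)/2 -/
def badA {n : ℕ} (v : Fin n) : Set (DOmega n) := {ω | ((n:ℝ) - 1)/2 ≤ (ddeg ω v : ℝ)}

/-- bad event B : degree less than `a` -/
def badB {n : ℕ} (v : Fin n) (a : ℝ) : Set (DOmega n) := {ω | (ddeg ω v : ℝ) < a}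

/-- bad event C : moderate degree but not Seymour -/
def badC {n : ℕ} (v : Fin n) (a : ℝ) : Set (DOmega n) :=
  {ω | ¬ dSeymour ω v ∧ a ≤ (ddeg ω v : ℝ) ∧ 2 * ddeg ω v + 2 ≤ n}

lemma notSeymour_subset (v : Fin n) (a : ℝ) :
    {ω : DOmega n | ¬ dSeymour ω v} ⊆ badA v ∪ (badB v a ∪ badC v a) := by
  intro ω hω
  by_cases hA : ((n:ℝ) - 1)/2 ≤ (ddeg ω v : ℝ)
  · exact Or.inl hA
  · by_cases hB : (ddeg ω v : ℝ) < a
    · exact Or.inr (Or.inl hB)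
    · push_neg at hA hB
      refine Or.inr (Or.inr ⟨hω, hB, ?_⟩)
      have h2 : (2 * (ddeg ω v) + 2 : ℝ) < (n:ℝ) + 1 := by
        push_cast
        linarith
      exact_mod_cast Nat.lt_succ_iff.mp (by exact_mod_cast h2)

lemma global_bad_subset :
    {ω : DOmega n | ¬ dS ω = n} ⊆ ⋃ v : Fin n, {ω : DOmega n | ¬ dSeymour ω v} := by
  intro ω hω
  by_contra hc
  simp only [Set.mem_iUnion, Set.mem_setOf_eq, not_exists, not_not] at hc
  apply hω
  have huniv : {v : Fin n | dSeymour ω v} = Set.univ := Set.eq_univ_of_forall hc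
  show dS ω = n
  rw [dS, huniv, Set.ncard_univ, Nat.card_eq_fintype_card, Fintype.card_fin]

/-- The key structural bound on the probability of `badC`. -/
lemma badC_bound (h0 : 0 ≤ p) (h1 : p ≤ 1) (v : Fin n) (a : ℝ) (B : ℝ) (hB : 0 ≤ B)
    (hkey : ∀ d : ℕ, a ≤ (d:ℝ) → 2*d+2 ≤ n →
      (((n - 1 - d).choose (n - 2*d)) : ℝ) * ((1-p) ^ (n - 2*d)) ^ d ≤ B) :
    dPr p (badC v a) ≤ B := by
  classical
  set Scand : Finset (Finset (Fin n)) :=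
    (Finset.univ.erase v).powerset.filter (fun S => a ≤ (S.card:ℝ) ∧ 2*S.card + 2 ≤ n) with hScand
  set Tcand : Finset (Fin n) → Finset (Finset (Fin n)) :=
    fun S => Finset.powersetCard (n - 2 * S.card) ((Finset.univ.erase v) \ S) with hTcand
  -- coverage
  have hcover : ∀ ω ∈ badC v a, ∃ i ∈ Scand.sigma Tcand, ω ∈ rowEv v i.1 i.2 := by
    intro ω hω
    obtain ⟨hsey, ha, h2d⟩ := hω
    set d := ddeg ω v with hd
    set S : Finset (Fin n) := Finset.univ.filter (fun w => v ≠ w ∧ ω v w = true) with hS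
    have hScard : S.card = d := rfl
    have hvS : v ∉ S := by simp [hS]
    have hSsub : S ⊆ Finset.univ.erase v := by
      intro x hx
      rw [hS, Finset.mem_filter] at hx
      exact Finset.mem_erase.mpr ⟨fun h => hx.2.1 h.symm, Finset.mem_univ x⟩
    -- N2 as a finset
    have hN2fin : (dN2 ω v).Finite := Set.toFinite _
    set F2 := hN2fin.toFinset with hF2
    have hF2card : F2.card = (dN2 ω v).ncard := (Set.ncard_eq_toFinset_card _ hN2fin).symm
    have hF2sub : F2 ⊆ (Finset.univ.erase v) \ S := by
      intro w hw
      rw [hF2, Set.Finite.mem_toFinset] at hw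
      obtain ⟨hwv, hnadj, _⟩ := hw
      refine Finset.mem_sdiff.mpr ⟨Finset.mem_erase.mpr ⟨hwv, Finset.mem_univ w⟩, ?_⟩
      intro hwS
      rw [hS, Finset.mem_filter] at hwS
      exact hnadj ⟨hwS.2.1, hwS.2.2⟩
    have hN2lt : (dN2 ω v).ncard < d := by
      have := hsey
      rw [dSeymour, not_le, dN1_ncard] at this
      exact this
    have hW0 : n - 2*d ≤ (((Finset.univ.erase v) \ S) \ F2).card := by
      have hc1 : ((Finset.univ.erase v) \ S).card = n - 1 - d := by
        rw [Finset.card_sdiff_of_subset hSsub, Finset.card_erase_of_mem (Finset.mem_univ v),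
          Finset.card_univ, Fintype.card_fin, hScard]
      have hc2 : (((Finset.univ.erase v) \ S) \ F2).card
          ≥ ((Finset.univ.erase v) \ S).card - F2.card := Finset.le_card_sdiff _ _
      have hc3 : F2.card < d := by rw [hF2card]; exact hN2lt
      omega
    obtain ⟨T, hTsub, hTcard⟩ := Finset.exists_subset_card_eq hW0
    refine ⟨⟨S, T⟩, ?_, ?_, ?_⟩
    · rw [Finset.mem_sigma]
      constructor
      · rw [hScand, Finset.mem_filter, Finset.mem_powerset]
        exact ⟨hSsub, by rw [hScard]; exact ha, by rw [hScard]; exact h2d⟩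
      · rw [hTcand, Finset.mem_powersetCard]
        exact ⟨hTsub.trans (Finset.sdiff_subset), by rw [hTcard, hScard]⟩
    · -- row condition
      intro w hwv
      rw [hS, Finset.mem_filter]
      constructor
      · intro h; exact ⟨Finset.mem_univ w, fun h' => hwv h'.symm, h⟩
      · intro h; exact h.2.2
    · -- no S → T arcs
      intro x hx w hw
      by_contra hxw
      have hxw' : ω x w = true := by simpa using hxw
      have hwW0 := hTsub hw
      rw [Finset.mem_sdiff] at hwW0
      obtain ⟨hw1, hw2⟩ := hwW0
      rw [Finset.mem_sdiff] at hw1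
      obtain ⟨hw3, hw4⟩ := hw1
      have hwv : w ≠ v := (Finset.mem_erase.mp hw3).1
      rw [hS, Finset.mem_filter] at hx
      have hxwne : x ≠ w := by
        intro h
        apply hw4
        rw [hS, Finset.mem_filter, ← h]
        exact ⟨Finset.mem_univ x, hx.2⟩
      apply hw2
      rw [hF2, Set.Finite.mem_toFinset]
      refine ⟨hwv, ?_, x, ⟨hx.2.1, hx.2.2⟩, ⟨hxwne, hxw'⟩⟩
      intro hadj
      apply hw4
      rw [hS, Finset.mem_filter]
      exact ⟨Finset.mem_univ w, hadj.1, hadj.2⟩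
  have hstep := dPr_le_sum h0 h1 (Scand.sigma Tcand) (fun i => rowEv v i.1 i.2)
    (badC v a) hcover
  refine hstep.trans ?_
  rw [Finset.sum_sigma]
  -- evaluate inner sums
  have hinner : ∀ S ∈ Scand, ∑ T ∈ Tcand S, dPr p (rowEv v S T)
      ≤ p ^ S.card * (1-p) ^ (n - 1 - S.card) * B := by
    intro S hSc
    rw [hScand, Finset.mem_filter, Finset.mem_powerset] at hSc
    obtain ⟨hSsub, haS, h2S⟩ := hSc
    have hvS : v ∉ S := fun h => (Finset.mem_erase.mp (hSsub h)).1 rfl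
    have hterm : ∀ T ∈ Tcand S, dPr p (rowEv v S T)
        = p ^ S.card * (1-p) ^ (n - 1 - S.card) * ((1-p) ^ (n - 2*S.card)) ^ S.card := by
      intro T hT
      rw [hTcand, Finset.mem_powersetCard] at hT
      obtain ⟨hTsub, hTcard⟩ := hT
      have hTprop : ∀ w ∈ T, w ∉ S ∧ w ≠ v := by
        intro w hw
        have := hTsub hw
        rw [Finset.mem_sdiff] at this
        exact ⟨this.2, (Finset.mem_erase.mp this.1).1⟩
      rw [dPr_rowEv hvS hTprop, hTcard]
    rw [Finset.sum_congr rfl hterm, Finset.sum_const, nsmul_eq_mul]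
    have hcardT : (Tcand S).card = (n - 1 - S.card).choose (n - 2*S.card) := by
      rw [hTcand, Finset.card_powersetCard, Finset.card_sdiff_of_subset hSsub,
        Finset.card_erase_of_mem (Finset.mem_univ v), Finset.card_univ, Fintype.card_fin]
    rw [hcardT]
    calc ((n - 1 - S.card).choose (n - 2*S.card) : ℝ)
          * (p ^ S.card * (1-p) ^ (n - 1 - S.card) * ((1-p) ^ (n - 2*S.card)) ^ S.card)
        = p ^ S.card * (1-p) ^ (n - 1 - S.card)
          * (((n - 1 - S.card).choose (n - 2*S.card) : ℝ) * ((1-p) ^ (n - 2*S.card)) ^ S.card) := by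
          ring
      _ ≤ p ^ S.card * (1-p) ^ (n - 1 - S.card) * B := by
          refine mul_le_mul_of_nonneg_left (hkey S.card haS h2S) ?_
          exact mul_nonneg (pow_nonneg h0 _) (pow_nonneg (by linarith) _)
  calc ∑ S ∈ Scand, ∑ T ∈ Tcand S, dPr p (rowEv v S T)
      ≤ ∑ S ∈ Scand, p ^ S.card * (1-p) ^ (n - 1 - S.card) * B :=
        Finset.sum_le_sum hinner
    _ ≤ ∑ S ∈ (Finset.univ.erase v).powerset, p ^ S.card * (1-p) ^ (n - 1 - S.card) * B := by
        refine Finset.sum_le_sum_of_subset_of_nonneg (Finset.filter_subset _ _) ?_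
        intro S _ _
        exact mul_nonneg (mul_nonneg (pow_nonneg h0 _) (pow_nonneg (by linarith) _)) hB
    _ = (∑ S ∈ (Finset.univ.erase v).powerset, p ^ S.card * (1-p) ^ (n - 1 - S.card)) * B := by
        rw [Finset.sum_mul]
    _ ≤ 1 * B := by
        refine mul_le_mul_of_nonneg_right (le_of_eq ?_) hB
        have hid := Finset.prod_add (fun _ : Fin n => p) (fun _ : Fin n => 1 - p)
          (Finset.univ.erase v)
        have hone : (∏ _i ∈ Finset.univ.erase v, (p + (1 - p))) = 1 := by
          simp
        rw [hone] at hid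
        have hid2 : ∑ S ∈ (Finset.univ.erase v).powerset, p ^ S.card * (1-p) ^ (n - 1 - S.card)
            = ∑ t ∈ (Finset.univ.erase v).powerset,
              (∏ _i ∈ t, p) * ∏ _i ∈ (Finset.univ.erase v) \ t, (1 - p) := by
          refine Finset.sum_congr rfl fun S hS => ?_
          rw [Finset.prod_const, Finset.prod_const,
            Finset.card_sdiff_of_subset (Finset.mem_powerset.mp hS),
            Finset.card_erase_of_mem (Finset.mem_univ v), Finset.card_univ, Fintype.card_fin]
        rw [hid2, ← hid]
    _ = B := one_mul B

end Events
section Numeric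
open Real
variable {n : ℕ} {p : ℝ}

lemma dsp_exp_rpow (x y : ℝ) : (Real.exp x) ^ y = Real.exp (x * y) := by
  rw [Real.rpow_def_of_pos (Real.exp_pos x), Real.log_exp]

lemma dsp_rpow_nat_exp (hn0 : (0:ℝ) < n) (y : ℝ) : (n:ℝ) ^ y = Real.exp (y * Real.log n) := by
  rw [Real.rpow_def_of_pos hn0, mul_comm]

lemma badA_bound (η : ℝ) (hη : 0 < η) (hn : 3 ≤ n) (v : Fin n)
    (hp0 : 0 < p) (hhalf : p < 1/2)
    (hL2 : 1 + η/4 ≤ (1 + η/2) * (1 - 1/(n:ℝ)))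
    (hlog : 0 < Real.log n)
    (hexp : 2*p*Real.exp (1-2*p) ≤ 1 - (2+η)*Real.log n / n) :
    dPr p (badA v) ≤ (n:ℝ) ^ (-(1+η/4)) := by
  have hn0 : (0:ℝ) < n := by positivity
  have hp1 : p ≤ 1 := by linarith
  have h1p : (0:ℝ) < 1 - p := by linarith
  set lam := (1-p)/p with hlam
  have hlam1 : 1 ≤ lam := by
    rw [hlam, le_div_iff₀ hp0]; linarith
  have hlam0 : 0 < lam := lt_of_lt_of_le one_pos hlam1
  set r := ((n:ℝ) - 1)/2 with hr
  have hn1 : (1:ℝ) ≤ (n:ℝ) := by exact_mod_cast Nat.one_le_of_lt hn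
  have hr0 : 0 ≤ r := by rw [hr]; linarith
  have hch := dsp_chernoff hp0.le hp1 v lam r hlam0 (badA v) ?_
  swap
  · intro ω hω
    calc lam ^ r ≤ lam ^ ((ddeg ω v : ℕ) : ℝ) :=
          Real.rpow_le_rpow_of_exponent_le hlam1 hω
      _ = lam ^ (ddeg ω v) := Real.rpow_natCast lam _
  refine hch.trans ?_
  have hbase : 1 - p + p * lam = 2*(1-p) := by
    rw [hlam, mul_div_cancel₀ _ (ne_of_gt hp0)]; ring
  rw [hbase]
  set x := 2*(1-p) with hx
  have hx0 : (0:ℝ) ≤ x := by rw [hx]; linarith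
  have hcast : ((n - 1 : ℕ) : ℝ) = (n:ℝ) - 1 := by
    have h1n : 1 ≤ n := Nat.one_le_of_lt hn
    push_cast [h1n]; ring
  have hpow : x ^ (n-1) = (x^2) ^ r := by
    have h2r : ((n - 1 : ℕ) : ℝ) = 2 * r := by rw [hcast, hr]; ring
    rw [← Real.rpow_natCast x (n-1), h2r, Real.rpow_mul hx0]
    congr 1
    rw [show (2:ℝ) = ((2:ℕ):ℝ) by norm_num, Real.rpow_natCast]
  rw [hpow, ← Real.div_rpow (sq_nonneg x) hlam0.le]
  have hquot : x^2 / lam = 4*p*(1-p) := by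
    rw [hx, hlam]; field_simp; ring
  rw [hquot]
  have h4p : (0:ℝ) ≤ 4*p*(1-p) := by positivity
  have hstep1 : 4*p*(1-p) ≤ 2*p*Real.exp (1-2*p) := by
    have h1 : 2*(1-p) ≤ Real.exp (1-2*p) := by
      have := Real.add_one_le_exp (1-2*p)
      linarith
    calc 4*p*(1-p) = 2*p * (2*(1-p)) := by ring
      _ ≤ 2*p * Real.exp (1-2*p) := by
          exact mul_le_mul_of_nonneg_left h1 (by linarith)
  have hstep2 : 4*p*(1-p) ≤ Real.exp (-((2+η)*Real.log n/n)) := by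
    have h2 : 1 - (2+η)*Real.log n/n ≤ Real.exp (-((2+η)*Real.log n/n)) := by
      have := Real.add_one_le_exp (-((2+η)*Real.log n/n))
      linarith
    linarith
  calc (4*p*(1-p)) ^ r ≤ (Real.exp (-((2+η)*Real.log n/n))) ^ r :=
        Real.rpow_le_rpow h4p hstep2 hr0
    _ = Real.exp (-((2+η)*Real.log n/n) * r) := dsp_exp_rpow _ _
    _ ≤ Real.exp (-(1+η/4) * Real.log n) := by
        apply Real.exp_le_exp.mpr
        have heq : (2+η)*Real.log n/n * r = ((1 + η/2) * (1 - 1/(n:ℝ))) * Real.log n := by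
          rw [hr]; field_simp
        have hge : (1+η/4) * Real.log n ≤ (2+η)*Real.log n/n * r := by
          rw [heq]
          exact mul_le_mul_of_nonneg_right hL2 hlog.le
        linarith
    _ = (n:ℝ) ^ (-(1+η/4)) := by rw [dsp_rpow_nat_exp hn0]

end Numeric
section NumericB
open Real
variable {n : ℕ} {p : ℝ}

lemma badB_bound (ε : ℝ) (hε : 0 < ε) (hn : 3 ≤ n) (v : Fin n)
    (hp0 : 0 < p) (hhalf : p < 1/2)
    (hlog : 0 < Real.log n)
    (hnp2 : (2+ε) * Real.log n ≤ (n:ℝ) * p^2)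
    (hL3 : 1 + 2 * Real.log n ≤ (ε/(8+4*ε))^2 * ((n:ℝ)*p)) :
    dPr p (badB v ((2+ε/2) * Real.log n / p)) ≤ (n:ℝ) ^ (-(2:ℝ)) := by
  have hn0 : (0:ℝ) < n := by positivity
  have hp1 : p ≤ 1 := by linarith
  have hn1 : (1:ℝ) ≤ (n:ℝ) := by exact_mod_cast Nat.one_le_of_lt hn
  obtain ⟨t, ht⟩ : ∃ t, t = ε/(8+4*ε) := ⟨_, rfl⟩
  rw [← ht] at hL3
  have ht0 : 0 < t := by rw [ht]; positivity
  have ht1 : t < 1 := by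
    rw [ht, div_lt_one (by linarith)]; linarith
  obtain ⟨s, hs⟩ : ∃ s, s = Real.exp (-t) := ⟨_, rfl⟩
  have hs0 : 0 < s := hs ▸ Real.exp_pos _
  have hs1 : s ≤ 1 := hs ▸ Real.exp_le_one_iff.mpr (by linarith)
  obtain ⟨a, ha⟩ : ∃ a, a = (2+ε/2) * Real.log n / p := ⟨_, rfl⟩
  rw [← ha]
  have ha0 : 0 < a := by rw [ha]; positivity
  have hch := dsp_chernoff hp0.le hp1 v s a hs0 (badB v a) ?_
  swap
  · intro ω hω
    have hω' : (ddeg ω v : ℝ) ≤ a := le_of_lt hω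
    calc s ^ a ≤ s ^ ((ddeg ω v : ℕ) : ℝ) :=
          Real.rpow_le_rpow_of_exponent_ge hs0 hs1 hω'
      _ = s ^ (ddeg ω v) := Real.rpow_natCast s _
  refine hch.trans ?_
  -- the mgf base
  have hbase : 1 - p + p * s = 1 - p*(1-s) := by ring
  have hbase0 : 0 ≤ 1 - p*(1-s) := by nlinarith
  have hbase_le : 1 - p*(1-s) ≤ Real.exp (-(p*(1-s))) := by
    have := Real.add_one_le_exp (-(p*(1-s))); linarith
  have hmgf : (1 - p + p * s) ^ (n-1) ≤ Real.exp (-((n:ℝ)-1) * (p*(1-s))) := by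
    rw [hbase]
    calc (1 - p*(1-s)) ^ (n-1) ≤ (Real.exp (-(p*(1-s)))) ^ (n-1) :=
          pow_le_pow_left₀ hbase0 hbase_le _
      _ = Real.exp (-((n-1:ℕ):ℝ) * (p*(1-s))) := by
          rw [← Real.exp_nat_mul]; ring_nf
      _ = Real.exp (-((n:ℝ)-1) * (p*(1-s))) := by
          congr 2
          have h1n : 1 ≤ n := Nat.one_le_of_lt hn
          push_cast [h1n]; ring
  have hsa : s ^ a = Real.exp (-(t*a)) := by
    rw [hs, dsp_exp_rpow]; ring_nf
  have hdiv : (1 - p + p * s) ^ (n-1) / s ^ a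
      ≤ Real.exp (t*a - ((n:ℝ)-1) * (p*(1-s))) := by
    rw [hsa]
    rw [div_le_iff₀ (Real.exp_pos _)]
    calc (1 - p + p * s) ^ (n-1) ≤ Real.exp (-((n:ℝ)-1) * (p*(1-s))) := hmgf
      _ = Real.exp (t*a - ((n:ℝ)-1) * (p*(1-s))) * Real.exp (-(t*a)) := by
          rw [← Real.exp_add]; ring_nf
  refine hdiv.trans ?_
  -- now bound the exponent by -2 log n
  have hexpo : t*a - ((n:ℝ)-1) * (p*(1-s)) ≤ -(2 * Real.log n) := by
    obtain ⟨θ, hθ⟩ : ∃ θ, θ = (4+ε)/(4+2*ε) := ⟨_, rfl⟩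
    have hθt : 1 - t = θ + t := by
      rw [hθ, ht]; field_simp; ring
    have hs_ge : θ + t ≤ s := by
      rw [← hθt, hs]
      have := Real.add_one_le_exp (-t); linarith
    have h1s : t * s ≤ 1 - s := by
      -- 1 - e^{-t} ≥ t e^{-t}  ⟺  e^t ≥ 1 + t
      have h := Real.add_one_le_exp t
      have : (t + 1) * s ≤ Real.exp t * s := mul_le_mul_of_nonneg_right h hs0.le
      rw [hs, ← Real.exp_add] at this
      simp only [add_neg_cancel, Real.exp_zero] at this
      nlinarith
    have hanp : a * p = (2+ε/2) * Real.log n := by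
      rw [ha]; field_simp
    have ha_le : a ≤ θ * ((n:ℝ)*p) := by
      rw [ha, hθ, div_le_iff₀ hp0]
      have h2 : (2+ε/2) * Real.log n ≤ ((4+ε)/(4+2*ε)) * ((n:ℝ)*p^2) := by
        have hfrac : (2+ε/2) = ((4+ε)/(4+2*ε)) * (2+ε) := by
          field_simp; ring
        rw [hfrac, mul_assoc]
        refine mul_le_mul_of_nonneg_left hnp2 (by positivity)
      calc (2+ε/2) * Real.log n ≤ ((4+ε)/(4+2*ε)) * ((n:ℝ)*p^2) := h2
        _ = (4+ε)/(4+2*ε) * ((n:ℝ)*p) * p := by ring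
    have hnp0 : 0 < (n:ℝ)*p := by positivity
    have key : t*a - ((n:ℝ)-1) * (p*(1-s)) ≤ -(t^2 * ((n:ℝ)*p)) + 1 := by
      have h3 : ((n:ℝ)-1) * (p*(1-s)) ≥ ((n:ℝ)-1) * (p*(t*s)) := by
        refine mul_le_mul_of_nonneg_left ?_ (by linarith)
        exact mul_le_mul_of_nonneg_left h1s hp0.le
      have h4 : ((n:ℝ)-1) * (p*(t*s)) = t*s*((n:ℝ)*p) - t*s*p := by ring
      have hts : t*s ≤ 1 := mul_le_one₀ ht1.le hs0.le hs1
      have h5 : t*s*p ≤ 1 := mul_le_one₀ hts hp0.le hp1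
      have h6 : t*a ≤ t*θ*((n:ℝ)*p) := by
        rw [mul_assoc]
        exact mul_le_mul_of_nonneg_left ha_le ht0.le
      have h7 : t*s*((n:ℝ)*p) ≥ t*(θ+t)*((n:ℝ)*p) := by
        refine mul_le_mul_of_nonneg_right ?_ hnp0.le
        exact mul_le_mul_of_nonneg_left hs_ge ht0.le
      have h8 : t*(θ+t)*((n:ℝ)*p) = t*θ*((n:ℝ)*p) + t^2*((n:ℝ)*p) := by ring
      linarith
    have hfin : -(t^2 * ((n:ℝ)*p)) + 1 ≤ -(2 * Real.log n) := by
      linarith [hL3]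
    linarith
  calc Real.exp (t*a - ((n:ℝ)-1) * (p*(1-s))) ≤ Real.exp (-(2*Real.log n)) :=
        Real.exp_le_exp.mpr hexpo
    _ = (n:ℝ) ^ (-(2:ℝ)) := by rw [dsp_rpow_nat_exp hn0]; ring_nf

end NumericB
section NumericC
open Real
variable {n : ℕ} {p : ℝ}

lemma badC_final (ε : ℝ) (hε : 0 < ε) (hn : 3 ≤ n) (v : Fin n)
    (hp0 : 0 < p) (hhalf : p < 1/2) (hlog : 0 < Real.log n) :
    dPr p (badC v ((2+ε/2) * Real.log n / p)) ≤ (n:ℝ) ^ (-(1+ε/2)) := by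
  have hn0 : (0:ℝ) < n := by positivity
  have hn1 : (1:ℝ) ≤ (n:ℝ) := by exact_mod_cast Nat.one_le_of_lt hn
  have hp1 : p ≤ 1 := by linarith
  have hq0 : (0:ℝ) ≤ 1 - p := by linarith
  refine badC_bound hp0.le hp1 v _ _ (Real.rpow_nonneg hn0.le _) ?_
  intro d hd h2d
  have hk1 : 1 ≤ n - 2*d := by omega
  -- (1-p)^d ≤ n^{-(2+ε/2)}
  have hpd : (2+ε/2) * Real.log n ≤ p * d := by
    have : p * ((2+ε/2) * Real.log n / p) ≤ p * d := mul_le_mul_of_nonneg_left hd hp0.le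
    rwa [mul_div_cancel₀ _ (ne_of_gt hp0)] at this
  have hqd : (1-p) ^ d ≤ (n:ℝ) ^ (-(2+ε/2)) := by
    calc (1-p) ^ d ≤ (Real.exp (-p)) ^ d := by
          refine pow_le_pow_left₀ hq0 ?_ d
          have := Real.add_one_le_exp (-p); linarith
      _ = Real.exp ((d:ℝ) * (-p)) := by rw [← Real.exp_nat_mul]
      _ ≤ Real.exp (-((2+ε/2) * Real.log n)) := by
          apply Real.exp_le_exp.mpr
          have : p * (d:ℝ) = (d:ℝ) * p := by ring
          nlinarith [hpd]
      _ = (n:ℝ) ^ (-(2+ε/2)) := by rw [dsp_rpow_nat_exp hn0]; ring_nf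
  have hbase : (n:ℝ) * (1-p) ^ d ≤ (n:ℝ) ^ (-(1+ε/2)) := by
    calc (n:ℝ) * (1-p) ^ d ≤ (n:ℝ) * (n:ℝ) ^ (-(2+ε/2)) :=
          mul_le_mul_of_nonneg_left hqd hn0.le
      _ = (n:ℝ) ^ (1:ℝ) * (n:ℝ) ^ (-(2+ε/2)) := by rw [Real.rpow_one]
      _ = (n:ℝ) ^ ((1:ℝ) + (-(2+ε/2))) := (Real.rpow_add hn0 _ _).symm
      _ = (n:ℝ) ^ (-(1+ε/2)) := by rw [show (1:ℝ) + (-(2+ε/2)) = -(1+ε/2) by ring]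
  have hbase1 : (n:ℝ) * (1-p) ^ d ≤ 1 :=
    hbase.trans (Real.rpow_le_one_of_one_le_of_nonpos hn1 (by linarith))
  have hbase0 : (0:ℝ) ≤ (n:ℝ) * (1-p) ^ d := by positivity
  calc (((n - 1 - d).choose (n - 2*d)) : ℝ) * ((1-p) ^ (n - 2*d)) ^ d
      = (((n - 1 - d).choose (n - 2*d)) : ℝ) * ((1-p) ^ d) ^ (n - 2*d) := by
        rw [← pow_right_comm]
    _ ≤ ((n:ℝ) ^ (n - 2*d)) * ((1-p) ^ d) ^ (n - 2*d) := by
        refine mul_le_mul_of_nonneg_right ?_ (by positivity)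
        have h1 : (n - 1 - d).choose (n - 2*d) ≤ (n - 1 - d) ^ (n - 2*d) :=
          Nat.choose_le_pow _ _
        have h2 : (n - 1 - d) ^ (n - 2*d) ≤ n ^ (n - 2*d) :=
          Nat.pow_le_pow_left (by omega) _
        calc (((n - 1 - d).choose (n - 2*d)) : ℝ) ≤ ((n ^ (n - 2*d) : ℕ) : ℝ) := by
              exact_mod_cast h1.trans h2
          _ = (n:ℝ) ^ (n - 2*d) := by push_cast; ring
    _ = ((n:ℝ) * (1-p) ^ d) ^ (n - 2*d) := (mul_pow _ _ _).symm
    _ ≤ ((n:ℝ) * (1-p) ^ d) ^ 1 := pow_le_pow_of_le_one hbase0 hbase1 hk1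
    _ = (n:ℝ) * (1-p) ^ d := pow_one _
    _ ≤ (n:ℝ) ^ (-(1+ε/2)) := hbase

end NumericC
section PerN
open Real

lemma dsp_per_n (ε η : ℝ) (hε : 0 < ε) (hη : 0 < η) (n : ℕ) (p : ℝ)
    (hn : 3 ≤ n) (hlog1 : 1 ≤ Real.log n)
    (hL2 : 1 + η/4 ≤ (1 + η/2) * (1 - 1/(n:ℝ)))
    (hL3' : 1 + 2 * Real.log n ≤ (ε/(8+4*ε))^2 * Real.sqrt n)
    (hsq : Real.sqrt ((2+ε) * Real.log n / n) ≤ p) (hhalf : p < 1/2)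
    (hexp : 2*p*Real.exp (1-2*p) ≤ 1 - (2+η) * Real.log n / n) :
    dPr p {ω : DOmega n | ¬ dS ω = n}
      ≤ (n:ℝ) ^ (-(η/4)) + (n:ℝ) ^ (-(1:ℝ)) + (n:ℝ) ^ (-(ε/2)) := by
  have hn0 : (0:ℝ) < n := by positivity
  have hlog : 0 < Real.log n := lt_of_lt_of_le one_pos hlog1
  have harg : (0:ℝ) < (2+ε) * Real.log n / n := by positivity
  have hp0 : 0 < p := lt_of_lt_of_le (Real.sqrt_pos.mpr harg) hsq
  have hp1 : p ≤ 1 := by linarith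
  have hnp2 : (2+ε) * Real.log n ≤ (n:ℝ) * p^2 := by
    have h1 : (2+ε) * Real.log n / n ≤ p^2 := by
      have h2 : Real.sqrt ((2+ε) * Real.log n / n) ^ 2 ≤ p ^ 2 :=
        pow_le_pow_left₀ (Real.sqrt_nonneg _) hsq 2
      rwa [Real.sq_sqrt harg.le] at h2
    rw [div_le_iff₀ hn0] at h1
    linarith [h1]
  have hnp1 : 1 ≤ (n:ℝ) * p^2 := by nlinarith
  have hsqn : Real.sqrt n ≤ (n:ℝ) * p := by
    have h1 : (n:ℝ) ≤ ((n:ℝ)*p)^2 := by nlinarith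
    calc Real.sqrt n ≤ Real.sqrt (((n:ℝ)*p)^2) := Real.sqrt_le_sqrt h1
      _ = (n:ℝ)*p := Real.sqrt_sq (by positivity)
  have hL3 : 1 + 2 * Real.log n ≤ (ε/(8+4*ε))^2 * ((n:ℝ)*p) := by
    have := mul_le_mul_of_nonneg_left hsqn (by positivity : (0:ℝ) ≤ (ε/(8+4*ε))^2)
    linarith
  set a := (2+ε/2) * Real.log n / p with ha
  -- per-vertex bound
  have hvert : ∀ v : Fin n, dPr p {ω : DOmega n | ¬ dSeymour ω v}
      ≤ (n:ℝ) ^ (-(1+η/4)) + (n:ℝ) ^ (-(2:ℝ)) + (n:ℝ) ^ (-(1+ε/2)) := by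
    intro v
    have h1 : dPr p {ω : DOmega n | ¬ dSeymour ω v}
        ≤ dPr p (badA v ∪ (badB v a ∪ badC v a)) :=
      dPr_mono hp0.le hp1 (notSeymour_subset v a)
    have h2 := dPr_union_le hp0.le hp1 (badA v) (badB v a ∪ badC v a)
    have h3 := dPr_union_le hp0.le hp1 (badB v a) (badC v a)
    have hA := badA_bound η hη hn v hp0 hhalf hL2 hlog hexp
    have hB := badB_bound ε hε hn v hp0 hhalf hlog hnp2 hL3
    have hC := badC_final ε hε hn v hp0 hhalf hlog
    rw [← ha] at hB hC
    linarith
  -- global union bound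
  have hglob : dPr p {ω : DOmega n | ¬ dS ω = n}
      ≤ ∑ _v : Fin n, ((n:ℝ) ^ (-(1+η/4)) + (n:ℝ) ^ (-(2:ℝ)) + (n:ℝ) ^ (-(1+ε/2))) := by
    have h1 := dPr_le_sum hp0.le hp1 (Finset.univ : Finset (Fin n))
      (fun v => {ω : DOmega n | ¬ dSeymour ω v}) {ω : DOmega n | ¬ dS ω = n} ?_
    · exact h1.trans (Finset.sum_le_sum fun v _ => hvert v)
    · intro ω hω
      have := global_bad_subset hω
      obtain ⟨v, hv⟩ := Set.mem_iUnion.mp this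
      exact ⟨v, Finset.mem_univ v, hv⟩
  rw [Finset.sum_const, Finset.card_univ, Fintype.card_fin, nsmul_eq_mul] at hglob
  refine hglob.trans (le_of_eq ?_)
  have hmul : ∀ x:ℝ, (n:ℝ) * (n:ℝ)^(-(1+x)) = (n:ℝ)^(-x) := by
    intro x
    calc (n:ℝ)*(n:ℝ)^(-(1+x)) = (n:ℝ)^(1:ℝ)*(n:ℝ)^(-(1+x)) := by rw [Real.rpow_one]
      _ = (n:ℝ)^((1:ℝ)+(-(1+x))) := (Real.rpow_add hn0 _ _).symm
      _ = (n:ℝ)^(-x) := by rw [show (1:ℝ)+(-(1+x)) = -x by ring]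
  have h2 : (n:ℝ) * (n:ℝ)^(-(2:ℝ)) = (n:ℝ)^(-(1:ℝ)) := by
    rw [show (-(2:ℝ)) = -(1+1) by norm_num, hmul 1]
  have hη4 := hmul (η/4)
  have hε2 := hmul (ε/2)
  rw [mul_add, mul_add, hη4, h2, hε2]

end PerN
section Final
open Real Filter

lemma dsp_E4 (c : ℝ) (hc0 : 0 < c) :
    ∀ᶠ x : ℝ in atTop, 1 + 2 * Real.log x ≤ c * Real.sqrt x := by
  have hlittle := (isLittleO_log_rpow_atTop (by norm_num : (0:ℝ) < 1/2)).def
    (show (0:ℝ) < c/4 by positivity)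
  have hsqrt_top : Tendsto (fun x:ℝ => Real.sqrt x) atTop atTop := by
    apply Filter.tendsto_atTop_atTop.mpr
    intro b
    exact ⟨b^2, fun a ha => by
      calc b ≤ |b| := le_abs_self b
        _ = Real.sqrt (b^2) := (Real.sqrt_sq_eq_abs b).symm
        _ ≤ Real.sqrt a := Real.sqrt_le_sqrt ha⟩
  filter_upwards [hlittle, eventually_ge_atTop (1:ℝ),
    hsqrt_top.eventually_ge_atTop (4/c)] with x h1 h2 h3
  have hx0 : (0:ℝ) ≤ x := by linarith
  have hlx : 0 ≤ Real.log x := Real.log_nonneg h2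
  have hsx : 0 ≤ Real.sqrt x := Real.sqrt_nonneg x
  rw [Real.norm_eq_abs, Real.norm_eq_abs, abs_of_nonneg hlx,
    abs_of_nonneg (Real.rpow_nonneg hx0 _), ← Real.sqrt_eq_rpow] at h1
  have h4 : 1 ≤ c/4 * Real.sqrt x := by
    calc (1:ℝ) = c/4 * (4/c) := by field_simp
      _ ≤ c/4 * Real.sqrt x := by
          exact mul_le_mul_of_nonneg_left h3 (by positivity)
  nlinarith [h1, h4, hsx, hc0]

end Final
section Thm
open Real Filter

theorem digraph_whp_all_seymour' (ε η : ℝ) (hε : 0 < ε) (hη : 0 < η)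
    (p : ℕ → ℝ)
    (hp : ∀ᶠ n : ℕ in Filter.atTop,
      Real.sqrt ((2 + ε) * Real.log n / n) ≤ p n ∧ p n < 1 / 2 ∧
        2 * p n * Real.exp (1 - 2 * p n) ≤ 1 - (2 + η) * Real.log n / n) :
    Filter.Tendsto (fun n : ℕ => dPr (p n) {ω : DOmega n | dS ω = n}) Filter.atTop
      (nhds 1) := by
  have hc0 : (0:ℝ) < (ε/(8+4*ε))^2 := by positivity
  have hE4 : ∀ᶠ n : ℕ in atTop, 1 + 2 * Real.log n ≤ (ε/(8+4*ε))^2 * Real.sqrt n :=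
    tendsto_natCast_atTop_atTop.eventually (dsp_E4 _ hc0)
  have hE2 : ∀ᶠ n : ℕ in atTop, 1 ≤ Real.log n :=
    tendsto_natCast_atTop_atTop.eventually (Real.tendsto_log_atTop.eventually_ge_atTop 1)
  have hE3 : ∀ᶠ n : ℕ in atTop, 1 + η/4 ≤ (1 + η/2) * (1 - 1/(n:ℝ)) := by
    have htend : Tendsto (fun n:ℕ => (1+η/2)*(1-1/(n:ℝ))) atTop (nhds ((1+η/2)*(1-0))) :=
      tendsto_const_nhds.mul (tendsto_const_nhds.sub tendsto_one_div_atTop_nhds_zero_nat)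
    exact htend.eventually_const_le (by nlinarith)
  have hE1 : ∀ᶠ n : ℕ in atTop, 3 ≤ n := eventually_ge_atTop 3
  -- upper bound eventually
  have hupper : ∀ᶠ n : ℕ in atTop, dPr (p n) {ω : DOmega n | ¬ dS ω = n}
      ≤ (n:ℝ) ^ (-(η/4)) + (n:ℝ) ^ (-(1:ℝ)) + (n:ℝ) ^ (-(ε/2)) := by
    filter_upwards [hp, hE1, hE2, hE3, hE4] with n h h1 h2 h3 h4
    exact dsp_per_n ε η hε hη n (p n) h1 h2 h3 h4 h.1 h.2.1 h.2.2
  have hlower : ∀ᶠ n : ℕ in atTop, 0 ≤ dPr (p n) {ω : DOmega n | ¬ dS ω = n} := by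
    filter_upwards [hp] with n h
    have hp0 : 0 ≤ p n := le_trans (Real.sqrt_nonneg _) h.1
    exact dPr_nonneg hp0 (by linarith [h.2.1]) _
  have hg : Tendsto (fun n:ℕ => (n:ℝ) ^ (-(η/4)) + (n:ℝ) ^ (-(1:ℝ)) + (n:ℝ) ^ (-(ε/2)))
      atTop (nhds 0) := by
    have k : ∀ (c:ℝ), 0 < c → Tendsto (fun n:ℕ => (n:ℝ) ^ (-c)) atTop (nhds 0) :=
      fun c hc => (tendsto_rpow_neg_atTop hc).comp tendsto_natCast_atTop_atTop
    have := ((k (η/4) (by positivity)).add (k 1 one_pos)).add (k (ε/2) (by positivity))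
    simpa using this
  have h0 : Tendsto (fun n:ℕ => dPr (p n) {ω : DOmega n | ¬ dS ω = n}) atTop (nhds 0) :=
    squeeze_zero' hlower hupper hg
  have hco : ∀ m : ℕ, dPr (p m) {ω : DOmega m | dS ω = m}
      = 1 - dPr (p m) {ω : DOmega m | ¬ dS ω = m} := by
    intro m
    have h := dPr_compl (p := p m) {ω : DOmega m | dS ω = m}
    rw [Set.compl_setOf] at h
    linarith
  have hfin : Tendsto (fun m:ℕ => 1 - dPr (p m) {ω : DOmega m | ¬ dS ω = m}) atTop (nhds 1) := by
    have := (tendsto_const_nhds (x := (1:ℝ)) (f := atTop)).sub h0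
    simpa using this
  exact (Filter.tendsto_congr hco).mpr hfin


/-- Fix `ε > 0` and `η > 0`, and let `(p_n)` be a sequence with
`√((2+ε)·log n / n) ≤ p_n < 1/2` and `2·p_n·e^{1−2p_n} ≤ 1 − (2+η)·log n / n` for all
large `n`.  Then with high probability every vertex of `D(n, p_n)` is a Seymour vertex:
`P(S_n = n) → 1` as `n → ∞`. -/
theorem digraph_whp_all_seymour (ε η : ℝ) (hε : 0 < ε) (hη : 0 < η)
    (p : ℕ → ℝ)
    (hp : ∀ᶠ n : ℕ in Filter.atTop,
      Real.sqrt ((2 + ε) * Real.log n / n) ≤ p n ∧ p n < 1 / 2 ∧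
        2 * p n * Real.exp (1 - 2 * p n) ≤ 1 - (2 + η) * Real.log n / n) :
    Filter.Tendsto (fun n : ℕ => dPr (p n) {ω : DOmega n | dS ω = n}) Filter.atTop
      (nhds 1) := by
  exact digraph_whp_all_seymour' ε η hε hη p hp

end Thm
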